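/- Let H₁,…,H_N be real Hilbert spaces with symmetric dictionaries D₁,…,D_N. Assume for each j and every positive coefficient sequence C with c_p → 0 and ∑ c_p = ∞, all greedy expansions (weakening parameter t = 1, prescribed coefficients C) of every element of H_j with respect to D_j converge. Let H = H₁ ⊕ ⋯ ⊕ H_N and D the dictionary consisting of elements with one component in some D_j and zeros elsewhere. Then for every f ∈ H and every such coefficient sequence C, all greedy expansions of f with respect to D with prescribed coefficients C and weakening parameter t = 1 converge to f. -/

import Mathlib

open RealInnerProductSpace Filter

lemma weakNormZero {X : Type*} [NormedAddCommGroup X] [InnerProductSpace ℝ X]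
    (D : Set X) (hd : (Submodule.span ℝ D).topologicalClosure = ⊤)
    (v : ℕ → X)
    (hfreq : ∀ ε > (0:ℝ), ∀ M : ℕ, ∃ n, M ≤ n ∧ ∀ g ∈ D, |⟪v n, g⟫| ≤ ε)
    (hcau : ∀ ε > (0:ℝ), ∃ M : ℕ, ∀ m ≥ M, ∀ n ≥ M, ‖v n - v m‖ ≤ ε) :
    Tendsto (fun n => ‖v n‖) atTop (nhds 0) := by
  rw [Metric.tendsto_atTop]
  intro ε hε
  set δ : ℝ := ε / 4 with hδdef
  have hδ : 0 < δ := by positivity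
  -- Cauchy index for δ
  obtain ⟨M₁, hM₁⟩ := hcau δ hδ
  -- approximate v M₁ by an element of the span
  have hmem : v M₁ ∈ closure ((Submodule.span ℝ D : Submodule ℝ X) : Set X) := by
    have : v M₁ ∈ (Submodule.span ℝ D).topologicalClosure := by
      rw [hd]; trivial
    exact this
  obtain ⟨w, hwmem, hwd'⟩ := Metric.mem_closure_iff.1 hmem δ hδ
  have hwd : ‖v M₁ - w‖ ≤ δ := by
    rw [dist_eq_norm] at hwd'; exact hwd'.le
  obtain ⟨a, hasupp, hasum⟩ := Submodule.mem_span_set.1 hwmem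
  set C : ℝ := ∑ g ∈ a.support, |a g| with hC
  have hC0 : 0 ≤ C := Finset.sum_nonneg fun _ _ => abs_nonneg _
  -- Cauchy index for δ²/(2(‖w‖+1))
  obtain ⟨M₂, hM₂⟩ := hcau (δ^2 / (2 * (‖w‖ + 1))) (by positivity)
  set M := max M₁ M₂ with hM
  -- frequent weak smallness index
  obtain ⟨n₀, hn₀M, hn₀⟩ := hfreq (δ^2 / (2 * (C + 1))) (by positivity) M
  refine ⟨M, fun n hn => ?_⟩
  have hxn : ‖v n‖ ^ 2 = ⟪v n, v n - v M₁⟫ + ⟪v n, v M₁ - w⟫ + ⟪v n - v n₀, w⟫ + ⟪v n₀, w⟫ := by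
    have hdec : v n = (v n - v M₁) + (v M₁ - w) + w := by abel
    have e1 : ⟪v n, (v n - v M₁) + (v M₁ - w) + w⟫ = ⟪v n, v n - v M₁⟫ + ⟪v n, v M₁ - w⟫ + ⟪v n, w⟫ := by
      rw [inner_add_right, inner_add_right]
    rw [← hdec] at e1
    have e2 : ⟪v n - v n₀, w⟫ = ⟪v n, w⟫ - ⟪v n₀, w⟫ := inner_sub_left _ _ _
    rw [← real_inner_self_eq_norm_sq]
    linarith
  have h1 : ⟪v n, v n - v M₁⟫ ≤ ‖v n‖ * δ := by
    calc ⟪v n, v n - v M₁⟫ ≤ ‖v n‖ * ‖v n - v M₁‖ := real_inner_le_norm _ _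
    _ ≤ ‖v n‖ * δ := by
        have := hM₁ M₁ le_rfl n (le_trans (le_max_left _ _) hn)
        exact mul_le_mul_of_nonneg_left this (norm_nonneg _)
  have h2 : ⟪v n, v M₁ - w⟫ ≤ ‖v n‖ * δ := by
    calc ⟪v n, v M₁ - w⟫ ≤ ‖v n‖ * ‖v M₁ - w‖ := real_inner_le_norm _ _
    _ ≤ ‖v n‖ * δ := mul_le_mul_of_nonneg_left hwd (norm_nonneg _)
  have h3 : ⟪v n - v n₀, w⟫ ≤ δ^2 / 2 := by
    calc ⟪v n - v n₀, w⟫ ≤ ‖v n - v n₀‖ * ‖w‖ := real_inner_le_norm _ _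
    _ ≤ (δ^2 / (2 * (‖w‖ + 1))) * ‖w‖ := by
        apply mul_le_mul_of_nonneg_right _ (norm_nonneg _)
        exact hM₂ n₀ (le_trans (le_max_right _ _) hn₀M) n (le_trans (le_max_right _ _) hn)
    _ ≤ δ^2 / 2 := by
        rw [div_mul_eq_mul_div, div_le_div_iff₀ (by positivity) (by norm_num)]
        nlinarith [norm_nonneg w, sq_nonneg δ]
  have h4 : ⟪v n₀, w⟫ ≤ δ^2 / 2 := by
    rw [← hasum, Finsupp.sum]
    rw [inner_sum]
    calc (∑ g ∈ a.support, ⟪v n₀, a g • g⟫) ≤ ∑ g ∈ a.support, |a g| * (δ^2 / (2 * (C + 1))) := by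
          apply Finset.sum_le_sum
          intro g hg
          rw [real_inner_smul_right]
          calc a g * ⟪v n₀, g⟫ ≤ |a g * ⟪v n₀, g⟫| := le_abs_self _
          _ = |a g| * |⟪v n₀, g⟫| := abs_mul _ _
          _ ≤ |a g| * (δ^2 / (2 * (C + 1))) :=
              mul_le_mul_of_nonneg_left (hn₀ g (hasupp hg)) (abs_nonneg _)
    _ = C * (δ^2 / (2 * (C + 1))) := by rw [← Finset.sum_mul]
    _ ≤ δ^2 / 2 := by
        rw [mul_div_assoc'] at *
        rw [div_le_div_iff₀ (by positivity) (by norm_num)]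
        nlinarith [sq_nonneg δ]
  have hkey : ‖v n‖ ^ 2 ≤ 2 * δ * ‖v n‖ + δ^2 := by
    rw [hxn]; nlinarith
  have hfin : ‖v n‖ ≤ 3 * δ := by nlinarith [norm_nonneg (v n)]
  rw [Real.dist_eq, sub_zero, abs_of_nonneg (norm_nonneg _)]
  calc ‖v n‖ ≤ 3 * δ := hfin
  _ < ε := by rw [hδdef]; linarith

lemma singleMemD {N : ℕ} {H : Fin N → Type*} [∀ j, NormedAddCommGroup (H j)]
    (D : ∀ j, Set (H j)) {i i' : Fin N} (h : i' = i) {v : H i'} (hv : v ∈ D i') :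
    Pi.single i' v i ∈ D i := by subst h; simpa using hv

lemma singleApplyInner {N : ℕ} {H : Fin N → Type*} [∀ j, NormedAddCommGroup (H j)]
    [∀ j, InnerProductSpace ℝ (H j)] {i i' : Fin N} (h : i' = i) (v : H i')
    (x : ∀ k, H k) : ⟪x i, Pi.single i' v i⟫ = ⟪x i', v⟫ := by subst h; simp

theorem stmt_16 (N : ℕ) (H : Fin N → Type*)
    [∀ j, NormedAddCommGroup (H j)] [∀ j, InnerProductSpace ℝ (H j)]
    (D : ∀ j, Set (H j))
    (hunit : ∀ j, ∀ g ∈ D j, ‖g‖ = 1)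
    (hsymm : ∀ j, ∀ g ∈ D j, -g ∈ D j)
    (hcomplete : ∀ j, (Submodule.span ℝ (D j)).topologicalClosure = ⊤)
    (hconv : ∀ j, ∀ c : ℕ → ℝ, (∀ p, 0 < c p) →
      Tendsto c atTop (nhds 0) →
      Tendsto (fun n => ∑ p ∈ Finset.range n, c p) atTop atTop →
      ∀ (h : H j) (φ F : ℕ → H j),
        (∀ m, φ m ∈ D j) → F 0 = h →
        (∀ m, ⟪F m, φ m⟫ = sSup ((fun g => ⟪F m, g⟫) '' (D j))) →
        (∀ m, F (m + 1) = F m - c m • φ m) →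
        Tendsto (fun n => ‖F n‖) atTop (nhds 0))
    (DD : Set (PiLp 2 H))
    (hDD : DD = {x | ∃ (j : Fin N), ∃ φ ∈ D j,
      x = (WithLp.equiv 2 (∀ j, H j)).symm (Pi.single j φ)}) :
    ∀ c : ℕ → ℝ, (∀ p, 0 < c p) →
      Tendsto c atTop (nhds 0) →
      Tendsto (fun n => ∑ p ∈ Finset.range n, c p) atTop atTop →
      ∀ (f : PiLp 2 H) (φ F : ℕ → PiLp 2 H),
        (∀ m, φ m ∈ DD) → F 0 = f →
        (∀ m, ⟪F m, φ m⟫ = sSup ((fun g => ⟪F m, g⟫) '' DD)) →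
        (∀ m, F (m + 1) = F m - c m • φ m) →
        Tendsto (fun n => ‖F n‖) atTop (nhds 0) := by
  intro c hcpos hc0 hcsum f φ F hφ hF0 hsup hrec
  classical
  -- decompose the dictionary elements
  have hφ' : ∀ m, ∃ (j : Fin N), ∃ ψ, ψ ∈ D j ∧
      φ m = (WithLp.equiv 2 (∀ j, H j)).symm (Pi.single j ψ) := by
    intro m
    have := hφ m
    rw [hDD] at this
    obtain ⟨j, ψ, hψ, hmeq⟩ := this
    exact ⟨j, ψ, hψ, hmeq⟩
  choose j ψ hψD hφeq using hφ'
  -- inner products against singles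
  have hinner_single : ∀ (x : PiLp 2 H) (i : Fin N) (v : H i),
      ⟪x, (WithLp.equiv 2 (∀ j, H j)).symm (Pi.single i v)⟫ = ⟪x i, v⟫ := by
    intro x i v
    rw [PiLp.inner_apply]
    rw [Fintype.sum_eq_single i]
    · simp [WithLp.equiv_symm_apply, PiLp.toLp_apply]
    · intro b hb
      simp [WithLp.equiv_symm_apply, PiLp.toLp_apply, Pi.single_eq_of_ne hb]
  have hnorm_single : ∀ (i : Fin N) (v : H i),
      ‖(WithLp.equiv 2 (∀ j, H j)).symm (Pi.single i v)‖ = ‖v‖ := fun i v =>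
    PiLp.norm_toLp_single 2 H i v
  have hφunit : ∀ m, ‖φ m‖ = 1 := by
    intro m; rw [hφeq m, hnorm_single]; exact hunit _ _ (hψD m)
  have hsingle_mem : ∀ (i : Fin N) (g : H i), g ∈ D i →
      (WithLp.equiv 2 (∀ j, H j)).symm (Pi.single i g) ∈ DD := by
    rw [hDD]; exact fun i g hg => ⟨i, g, hg, rfl⟩
  have hbdd : ∀ n, BddAbove ((fun g => ⟪F n, g⟫) '' DD) := by
    intro n
    refine ⟨‖F n‖, ?_⟩
    rintro y ⟨g, hg, rfl⟩
    rw [hDD] at hg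
    obtain ⟨i, ψ', hψ', rfl⟩ := hg
    calc ⟪F n, (WithLp.equiv 2 (∀ j, H j)).symm (Pi.single i ψ')⟫
        ≤ ‖F n‖ * ‖(WithLp.equiv 2 (∀ j, H j)).symm (Pi.single i ψ')‖ := real_inner_le_norm _ _
      _ = ‖F n‖ := by rw [hnorm_single, hunit _ _ hψ', mul_one]
  set s : ℕ → ℝ := fun n => ⟪F n, φ n⟫ with hsdef
  have hcomp_le : ∀ (n : ℕ) (i : Fin N) (g : H i), g ∈ D i → ⟪F n i, g⟫ ≤ s n := by
    intro n i g hg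
    have h1 : ⟪F n, (WithLp.equiv 2 (∀ j, H j)).symm (Pi.single i g)⟫ ≤ s n := by
      rw [hsdef]
      simp only []
      rw [hsup n]
      exact le_csSup (hbdd n) ⟨_, hsingle_mem i g hg, rfl⟩
    rwa [hinner_single] at h1
  have hsval : ∀ n, s n = ⟪F n (j n), ψ n⟫ := by
    intro n; rw [hsdef]; simp only []; rw [hφeq n, hinner_single]
  have hs0 : ∀ n, 0 ≤ s n := by
    intro n
    have h2 : ⟪F n (j n), -ψ n⟫ ≤ s n := hcomp_le n _ _ (hsymm _ _ (hψD n))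
    rw [inner_neg_right] at h2
    have := hsval n
    linarith
  -- componentwise recurrence
  have hFrec : ∀ (n : ℕ) (i : Fin N),
      F (n+1) i = F n i - c n • (Pi.single (j n) (ψ n) i : H i) := by
    intro n i
    rw [hrec n, hφeq n]
    rfl
  have hFrec_ne : ∀ (n : ℕ) (i : Fin N), j n ≠ i → F (n+1) i = F n i := by
    intro n i hne
    rw [hFrec n i, Pi.single_eq_of_ne (Ne.symm hne), smul_zero, sub_zero]
  -- frequent smallness of s
  have hfreqs : ∀ ε > (0:ℝ), ∀ M : ℕ, ∃ n, M ≤ n ∧ s n ≤ ε := by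
    intro ε hε M
    by_contra hcon
    push_neg at hcon
    rw [Metric.tendsto_atTop] at hc0
    obtain ⟨M', hM'⟩ := hc0 ε hε
    set K := max M M' with hK
    have hstep : ∀ n, K ≤ n → ‖F (n+1)‖^2 ≤ ‖F n‖^2 - ε * c n := by
      intro n hn
      have hcε : c n ≤ ε := by
        have := hM' n (le_trans (le_max_right _ _) hn)
        rw [Real.dist_eq, sub_zero] at this
        exact (abs_lt.1 this).2.le
      have hsn : ε < s n := hcon n (le_trans (le_max_left _ _) hn)
      have hexp : ‖F (n+1)‖^2 = ‖F n‖^2 - 2 * (c n * s n) + (c n)^2 := by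
        rw [hrec n, norm_sub_sq_real, real_inner_smul_right, norm_smul, hφunit n,
          mul_one, Real.norm_eq_abs, sq_abs]
      nlinarith [hcpos n]
    have hge : ∀ n, K ≤ n → ‖F n‖^2 ≤ ‖F K‖^2 - ε * ∑ m ∈ Finset.Ico K n, c m := by
      intro n hn
      induction n, hn using Nat.le_induction with
      | base => simp
      | succ n hn ih =>
        rw [Finset.sum_Ico_succ_top hn, mul_add]
        have := hstep n hn
        linarith
    have hdiv : Tendsto (fun n => ∑ m ∈ Finset.Ico K n, c m) atTop atTop := by
      have h1 : Tendsto (fun n => (∑ m ∈ Finset.range n, c m) - ∑ m ∈ Finset.range K, c m)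
          atTop atTop := tendsto_atTop_add_const_right _ _ hcsum
      refine Tendsto.congr' ?_ h1
      filter_upwards [eventually_ge_atTop K] with n hn
      rw [Finset.sum_Ico_eq_sub _ hn]
    obtain ⟨n, hnK, hbig⟩ : ∃ n, K ≤ n ∧ (‖F K‖^2 + 1) / ε ≤ ∑ m ∈ Finset.Ico K n, c m := by
      have := (hdiv.eventually_ge_atTop ((‖F K‖^2 + 1) / ε)).and (eventually_ge_atTop K)
      obtain ⟨n, h1, h2⟩ := this.exists
      exact ⟨n, h2, h1⟩
    have h2 : ‖F K‖^2 + 1 ≤ ε * ∑ m ∈ Finset.Ico K n, c m := by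
      rw [div_le_iff₀ hε] at hbig
      linarith [hbig]
    have h3 := hge n hnK
    nlinarith [sq_nonneg ‖F n‖]
  -- componentwise convergence
  have hcompconv : ∀ i : Fin N, Tendsto (fun n => ‖F n i‖) atTop (nhds 0) := by
    intro i
    have hdiff : ∀ m, ‖F (m+1) i - F m i‖ = if j m = i then c m else 0 := by
      intro m
      by_cases h : j m = i
      · rw [if_pos h, hFrec m i]
        have h1 : ‖Pi.single (j m) (ψ m) i‖ = 1 := by
          subst h; rw [Pi.single_eq_same]; exact hunit _ _ (hψD m)
        rw [sub_sub_cancel_left, norm_neg, norm_smul, h1, mul_one, Real.norm_eq_abs,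
          abs_of_pos (hcpos m)]
      · rw [if_neg h, hFrec_ne m i h, sub_self, norm_zero]
    set d : ℕ → ℝ := fun m => if j m = i then c m else 0 with hddef
    have hd0 : ∀ m, 0 ≤ d m := by
      intro m; rw [hddef]; dsimp only; split
      · exact (hcpos m).le
      · exact le_refl _
    have htel : ∀ m n, m ≤ n → ‖F n i - F m i‖ ≤ ∑ k ∈ Finset.Ico m n, d k := by
      intro m n h
      induction n, h using Nat.le_induction with
      | base => simp
      | succ n hn ih =>
        rw [Finset.sum_Ico_succ_top hn]
        calc ‖F (n+1) i - F m i‖ ≤ ‖F (n+1) i - F n i‖ + ‖F n i - F m i‖ := by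
              have := norm_add_le (F (n+1) i - F n i) (F n i - F m i)
              simpa using this
          _ ≤ d n + ∑ k ∈ Finset.Ico m n, d k := by
              rw [hdiff n]; exact add_le_add le_rfl ih
          _ = (∑ k ∈ Finset.Ico m n, d k) + d n := by ring
    by_cases hsumb : BddAbove (Set.range (fun n => ∑ m ∈ Finset.range n, d m))
    · -- Case 2 : summable component
      obtain ⟨B, hB⟩ := hsumb
      have hsummable : Summable d := by
        apply summable_of_sum_range_le hd0
        intro n
        exact hB ⟨n, rfl⟩
      apply weakNormZero (D i) (hcomplete i)
      · -- hfreq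
        intro ε hε M
        obtain ⟨n, hnM, hsn⟩ := hfreqs ε hε M
        refine ⟨n, hnM, fun g hg => ?_⟩
        have h1 : ⟪F n i, g⟫ ≤ s n := hcomp_le n i g hg
        have h2 : ⟪F n i, -g⟫ ≤ s n := hcomp_le n i (-g) (hsymm i g hg)
        rw [inner_neg_right] at h2
        rw [abs_le]
        constructor <;> linarith
      · -- hcau
        intro ε hε
        have hP : CauchySeq (fun n => ∑ m ∈ Finset.range n, d m) :=
          hsummable.hasSum.tendsto_sum_nat.cauchySeq
        rw [Metric.cauchySeq_iff'] at hP
        obtain ⟨M, hM⟩ := hP ε hε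
        refine ⟨M, fun m hm n hn => ?_⟩
        have key : ∀ a b : ℕ, M ≤ a → a ≤ b → ‖F b i - F a i‖ ≤ ε := by
          intro a b ha hab
          calc ‖F b i - F a i‖ ≤ ∑ k ∈ Finset.Ico a b, d k := htel a b hab
            _ = (∑ k ∈ Finset.range b, d k) - ∑ k ∈ Finset.range a, d k :=
                Finset.sum_Ico_eq_sub _ hab
            _ ≤ (∑ k ∈ Finset.range b, d k) - ∑ k ∈ Finset.range M, d k := by
                have : (∑ k ∈ Finset.range M, d k) ≤ ∑ k ∈ Finset.range a, d k :=
                  Finset.sum_le_sum_of_subset_of_nonneg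
                    (Finset.range_subset_range.2 ha) (fun k _ _ => hd0 k)
                linarith
            _ ≤ ε := by
                have h := hM b (le_trans ha hab)
                rw [Real.dist_eq] at h
                have h2 := le_abs_self ((∑ k ∈ Finset.range b, d k) - ∑ k ∈ Finset.range M, d k)
                linarith
        rcases le_total m n with h | h
        · exact key m n hm h
        · rw [norm_sub_rev]; exact key n m hn h
    · -- Case 1 : divergent component
      set p : ℕ → Prop := fun m => j m = i with hpdef
      haveI hinst : DecidablePred p := fun m => inferInstanceAs (Decidable (j m = i))
      have hinf : (setOf p).Infinite := by
        by_contra hfin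
        rw [Set.not_infinite] at hfin
        apply hsumb
        refine ⟨∑ m ∈ hfin.toFinset, c m, ?_⟩
        rintro y ⟨n, rfl⟩
        calc (∑ m ∈ Finset.range n, d m) = ∑ m ∈ (Finset.range n).filter p, c m := by
              rw [Finset.sum_filter]
              apply Finset.sum_congr rfl
              intro x _
              by_cases h : j x = i <;> simp [hddef, h, hpdef]
          _ ≤ ∑ m ∈ hfin.toFinset, c m := by
              apply Finset.sum_le_sum_of_subset_of_nonneg
              · intro x hx
                rw [Set.Finite.mem_toFinset]
                exact (Finset.mem_filter.1 hx).2
              · exact fun k _ _ => (hcpos k).le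
      set σ : ℕ → ℕ := Nat.nth p with hσdef
      have hσmono : StrictMono σ := Nat.nth_strictMono hinf
      have hjσ : ∀ k, j (σ k) = i := fun k => Nat.nth_mem_of_infinite hinf k
      set φ' : ℕ → H i := fun k => Pi.single (j (σ k)) (ψ (σ k)) i with hφ'def
      have hφ'mem : ∀ k, φ' k ∈ D i := fun k => singleMemD D (hjσ k) (hψD (σ k))
      -- constancy of the i-th component outside p-steps
      have hconst : ∀ a b, a ≤ b → (∀ m, a ≤ m → m < b → ¬ p m) → F b i = F a i := by
        intro a b hab hno
        induction b, hab using Nat.le_induction with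
        | base => rfl
        | succ b hb ih =>
          have h1 : ¬ p b := hno b hb (Nat.lt_succ_self b)
          rw [hFrec_ne b i h1]
          exact ih fun m hm hmb => hno m hm (hmb.trans (Nat.lt_succ_self b))
      have hF'0 : F (σ 0) i = f i := by
        rw [← hF0]
        apply hconst 0 (σ 0) (Nat.zero_le _)
        intro m _ hmlt hp
        have h1 : σ (Nat.count p m) = m := Nat.nth_count hp
        have h2 : σ 0 ≤ σ (Nat.count p m) := hσmono.monotone (Nat.zero_le _)
        omega
      have hF'rec : ∀ k, F (σ (k+1)) i = F (σ k) i - c (σ k) • φ' k := by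
        intro k
        have h1 : F (σ (k+1)) i = F (σ k + 1) i := by
          apply hconst (σ k + 1) (σ (k+1)) (hσmono (Nat.lt_succ_self k))
          intro m hm hmlt hp
          have e1 : σ (Nat.count p m) = m := Nat.nth_count hp
          have e2 : Nat.count p (σ k + 1) = k + 1 := Nat.count_nth_succ_of_infinite hinf k
          have e3 : Nat.count p (σ k + 1) ≤ Nat.count p m := Nat.count_monotone p hm
          have e4 : σ (k+1) ≤ σ (Nat.count p m) := hσmono.monotone (by omega)
          omega
        rw [h1, hFrec (σ k) i]
      have hF'sup : ∀ k, ⟪F (σ k) i, φ' k⟫ = sSup ((fun g => ⟪F (σ k) i, g⟫) '' (D i)) := by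
        intro k
        have hval : ⟪F (σ k) i, φ' k⟫ = s (σ k) := by
          rw [hφ'def]
          rw [singleApplyInner (hjσ k) (ψ (σ k)) (F (σ k))]
          rw [hsval]
        have hgr : IsGreatest ((fun g => ⟪F (σ k) i, g⟫) '' (D i)) (s (σ k)) := by
          constructor
          · exact ⟨φ' k, hφ'mem k, hval⟩
          · rintro y ⟨g, hg, rfl⟩
            exact hcomp_le _ i g hg
        rw [hval]
        exact hgr.csSup_eq.symm
      have hc'pos : ∀ k, 0 < c (σ k) := fun k => hcpos _
      have hc'0 : Tendsto (fun k => c (σ k)) atTop (nhds 0) := hc0.comp hσmono.tendsto_atTop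
      have hAle : ∀ n, (∑ m ∈ Finset.range n, d m) ≤ ∑ k ∈ Finset.range n, c (σ k) := by
        intro n
        have e0 : (∑ m ∈ Finset.range n, d m) = ∑ m ∈ (Finset.range n).filter p, c m := by
          rw [Finset.sum_filter]
          apply Finset.sum_congr rfl
          intro x _
          by_cases h : j x = i <;> simp [hddef, h, hpdef]
        have hinj : ∀ x ∈ (Finset.range n).filter p, ∀ y ∈ (Finset.range n).filter p,
            Nat.count p x = Nat.count p y → x = y := by
          intro x hx y hy hxy
          have e1 : σ (Nat.count p x) = x := Nat.nth_count (Finset.mem_filter.1 hx).2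
          have e2 : σ (Nat.count p y) = y := Nat.nth_count (Finset.mem_filter.1 hy).2
          rw [← e1, ← e2, hxy]
        have e1 : ∑ m ∈ (Finset.range n).filter p, c m
            = ∑ m ∈ ((Finset.range n).filter p).image (Nat.count p), c (σ m) := by
          rw [Finset.sum_image hinj]
          apply Finset.sum_congr rfl
          intro x hx
          exact (congrArg c (Nat.nth_count (Finset.mem_filter.1 hx).2)).symm
        have hsub : ((Finset.range n).filter p).image (Nat.count p) ⊆ Finset.range n := by
          intro k hk
          obtain ⟨x, hx, rfl⟩ := Finset.mem_image.1 hk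
          have := Nat.count_le (p := p) (n := x)
          have hxn := Finset.mem_range.1 (Finset.mem_filter.1 hx).1
          exact Finset.mem_range.2 (by omega)
        rw [e0, e1]
        exact Finset.sum_le_sum_of_subset_of_nonneg hsub fun k _ _ => (hcpos _).le
      have hc'sum : Tendsto (fun n => ∑ k ∈ Finset.range n, c (σ k)) atTop atTop := by
        apply tendsto_atTop_atTop_of_monotone'
        · intro a b hab
          exact Finset.sum_le_sum_of_subset_of_nonneg
            (Finset.range_subset_range.2 hab) fun k _ _ => (hcpos _).le
        · intro hb
          apply hsumb
          obtain ⟨B, hB⟩ := hb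
          refine ⟨B, ?_⟩
          rintro y ⟨n, rfl⟩
          exact le_trans (hAle n) (hB ⟨n, rfl⟩)
      have hmain := hconv i (fun k => c (σ k)) hc'pos hc'0 hc'sum (f i) φ'
        (fun k => F (σ k) i) hφ'mem hF'0 hF'sup hF'rec
      have hcount : ∀ n, F n i = F (σ (Nat.count p n)) i := by
        intro n
        refine (hconst n (σ (Nat.count p n)) (Nat.le_nth_count hinf n) ?_).symm
        intro m hm hmlt hp
        have e1 : σ (Nat.count p m) = m := Nat.nth_count hp
        have e2 : σ (Nat.count p n) ≤ σ (Nat.count p m) := hσmono.monotone (Nat.count_monotone p hm)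
        omega
      have hcount_tendsto : Tendsto (Nat.count p) atTop atTop := by
        apply tendsto_atTop_atTop_of_monotone (Nat.count_monotone p)
        intro b
        refine ⟨σ b + 1, ?_⟩
        rw [Nat.count_nth_succ_of_infinite hinf]
        omega
      have hfinal := hmain.comp hcount_tendsto
      refine hfinal.congr fun n => ?_
      simp only [Function.comp]
      exact congrArg norm (hcount n).symm

  -- combine
  have hsq : Tendsto (fun n => ∑ i, ‖F n i‖^2) atTop (nhds 0) := by
    have h0 : (0:ℝ) = ∑ i : Fin N, 0 := by simp
    rw [h0]
    apply tendsto_finset_sum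
    intro i _
    have := (hcompconv i).mul (hcompconv i)
    simpa [pow_two] using this
  have hnorm : ∀ n, ‖F n‖ = Real.sqrt (∑ i, ‖F n i‖^2) := by
    intro n
    rw [← PiLp.norm_sq_eq_of_L2, Real.sqrt_sq (norm_nonneg _)]
  have := (Real.continuous_sqrt.tendsto 0).comp hsq
  rw [Real.sqrt_zero] at this
  refine Tendsto.congr ?_ this
  intro n
  rw [hnorm n]
  rfl
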